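/- Assume in addition that σ_j ≤ λ for every j ∈ J, that X_j ~ N(0, σ_j²) independently for j ∈ J, and set α_j = E[|X_j|^t | |X_j|^t > τ]. Then there exists a constant C > 0 depending only on t such that Σ_{j∈J} Var[ (|X_j|^t − α_j) · 1{|X_j|^t > τ} ] ≤ C ρ²; moreover each summand (|X_j|^t − α_j) 1{|X_j|^t > τ} has mean zero. -/

import Mathlib

open MeasureTheory ProbabilityTheory Real Set NNReal ENNReal

private lemma rpow_le_exp_aux {p r : ℝ} (hp : 0 ≤ p) (hr : 0 ≤ r) :
    r ^ p ≤ Real.exp (2 * p ^ 2 + r ^ 2 / 8) := by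
  rcases eq_or_lt_of_le hr with h | h
  · rcases eq_or_lt_of_le hp with hp' | hp'
    · rw [← h, ← hp', Real.rpow_zero]; exact Real.one_le_exp (by positivity)
    · rw [← h, Real.zero_rpow (ne_of_gt hp')]; positivity
  · rw [Real.rpow_def_of_pos h]
    apply Real.exp_le_exp.mpr
    have hlog : Real.log r ≤ r - 1 := Real.log_le_sub_one_of_pos h
    nlinarith [sq_nonneg (r - 4 * p), mul_le_mul_of_nonneg_left hlog hp]

private lemma abs_rpow_le_aux {p σ : ℝ} (hp : 0 ≤ p) (hσ : 0 < σ) (x : ℝ) :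
    |x| ^ p ≤ Real.exp (2 * p ^ 2) * σ ^ p * Real.exp (x ^ 2 / (8 * σ ^ 2)) := by
  have h1 : σ * (|x| / σ) = |x| := by field_simp
  have h2 : |x| ^ p = σ ^ p * (|x| / σ) ^ p := by
    rw [← Real.mul_rpow hσ.le (by positivity), h1]
  rw [h2]
  have h3 : (|x| / σ) ^ p ≤ Real.exp (2 * p ^ 2 + (|x| / σ) ^ 2 / 8) :=
    rpow_le_exp_aux hp (by positivity)
  have h4 : (|x| / σ) ^ 2 / 8 = x ^ 2 / (8 * σ ^ 2) := by
    rw [div_pow, sq_abs]; ring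
  calc σ ^ p * (|x| / σ) ^ p ≤ σ ^ p * Real.exp (2 * p ^ 2 + (|x| / σ) ^ 2 / 8) := by
        apply mul_le_mul_of_nonneg_left h3 (Real.rpow_nonneg hσ.le p)
    _ = Real.exp (2 * p ^ 2) * σ ^ p * Real.exp (x ^ 2 / (8 * σ ^ 2)) := by
        rw [h4, Real.exp_add]; ring

private lemma pdf_formula (σ : ℝ) (hσ : 0 < σ) (x : ℝ) :
    gaussianPDFReal 0 (σ ^ 2).toNNReal x
      = (Real.sqrt (2 * Real.pi * σ ^ 2))⁻¹ * Real.exp (-x ^ 2 / (2 * σ ^ 2)) := by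
  have hv : ((σ ^ 2).toNNReal : ℝ) = σ ^ 2 := Real.coe_toNNReal _ (by positivity)
  rw [gaussianPDFReal, hv]
  ring_nf

private lemma pdf_mul_integrable (σ p : ℝ) (hσ : 0 < σ) (hp : 0 ≤ p) :
    Integrable (fun x : ℝ =>
      gaussianPDFReal 0 (σ ^ 2).toNNReal x * |x| ^ p) := by
  set c : ℝ := (Real.sqrt (2 * Real.pi * σ ^ 2))⁻¹ with hc
  have hcpos : 0 < c := by rw [hc]; positivity
  have hdom : Integrable (fun x : ℝ =>
      c * Real.exp (2 * p ^ 2) * σ ^ p * Real.exp (-(3 / (8 * σ ^ 2)) * x ^ 2)) := by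
    exact (integrable_exp_neg_mul_sq (by positivity)).const_mul _
  apply hdom.mono'
  · apply Measurable.aestronglyMeasurable
    exact ((measurable_gaussianPDFReal 0 _).mul (measurable_id.abs.pow_const p))
  · filter_upwards with x
    rw [Real.norm_eq_abs, abs_of_nonneg (mul_nonneg (gaussianPDFReal_nonneg _ _ _)
      (Real.rpow_nonneg (abs_nonneg x) p))]
    rw [pdf_formula σ hσ x]
    have h1 : |x| ^ p ≤ Real.exp (2 * p ^ 2) * σ ^ p * Real.exp (x ^ 2 / (8 * σ ^ 2)) :=
      abs_rpow_le_aux hp hσ x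
    have h2 : Real.exp (-x ^ 2 / (2 * σ ^ 2)) * (Real.exp (2 * p ^ 2) * σ ^ p
        * Real.exp (x ^ 2 / (8 * σ ^ 2)))
        = Real.exp (2 * p ^ 2) * σ ^ p * Real.exp (-(3 / (8 * σ ^ 2)) * x ^ 2) := by
      rw [mul_comm, mul_assoc, ← Real.exp_add]
      congr 2
      field_simp
      ring
    calc c * Real.exp (-x ^ 2 / (2 * σ ^ 2)) * |x| ^ p
        ≤ c * Real.exp (-x ^ 2 / (2 * σ ^ 2)) * (Real.exp (2 * p ^ 2) * σ ^ p
            * Real.exp (x ^ 2 / (8 * σ ^ 2))) := by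
          apply mul_le_mul_of_nonneg_left h1 (by positivity)
      _ = c * Real.exp (2 * p ^ 2) * σ ^ p * Real.exp (-(3 / (8 * σ ^ 2)) * x ^ 2) := by
          rw [mul_assoc c, h2]; ring


set_option maxHeartbeats 2000000 in
private lemma single_gaussian (t : ℝ) (ht : 1 ≤ t) (σ lam τ : ℝ) (hσ : 0 < σ)
    (hlam : 0 < lam) (hsl : σ ≤ lam) (hτge : (4 * t) ^ t * lam ^ t ≤ τ) (α : ℝ)
    (hα : α = (∫ x in {x : ℝ | τ < |x| ^ t}, |x| ^ t ∂(gaussianReal 0 (σ ^ 2).toNNReal)) /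
          ((gaussianReal 0 (σ ^ 2).toNNReal) {x : ℝ | τ < |x| ^ t}).toReal) :
    (∫ x, {y : ℝ | τ < |y| ^ t}.indicator (fun y => |y| ^ t - α) x
          ∂(gaussianReal 0 (σ ^ 2).toNNReal)) = 0 ∧
      variance ({y : ℝ | τ < |y| ^ t}.indicator (fun y => |y| ^ t - α))
          (gaussianReal 0 (σ ^ 2).toNNReal)
        ≤ 2 * Real.exp (8 * t ^ 2) * (σ ^ t * lam ^ t) * Real.exp (-lam ^ 2 / σ ^ 2) := by
  have ht0 : 0 < t := by linarith
  have hτpos : 0 < τ :=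
    lt_of_lt_of_le (mul_pos (Real.rpow_pos_of_pos (by linarith) t)
      (Real.rpow_pos_of_pos hlam t)) hτge
  set v := (σ ^ 2).toNNReal with hvdef
  have hv : v ≠ 0 := by
    simp only [hvdef, ne_eq, Real.toNNReal_eq_zero, not_le]
    positivity
  set μ := gaussianReal 0 v with hμdef
  set S := {y : ℝ | τ < |y| ^ t} with hSdef
  have hfm : Measurable (fun x : ℝ => |x| ^ t) := measurable_id.abs.pow_const t
  have hS : MeasurableSet S := measurableSet_lt measurable_const hfm
  set g : ℝ → ℝ≥0 := fun x => (gaussianPDFReal 0 v x).toNNReal with hgdef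
  have hg : Measurable g := (measurable_gaussianPDFReal 0 v).real_toNNReal
  have hgx : ∀ x, (g x : ℝ) = gaussianPDFReal 0 v x := fun x =>
    Real.coe_toNNReal _ (gaussianPDFReal_nonneg 0 v x)
  have hμ : μ = MeasureTheory.volume.withDensity (fun x => ((g x : ℝ≥0) : ℝ≥0∞)) := by
    rw [hμdef, gaussianReal_of_var_ne_zero 0 hv]; rfl
  -- integrability of |x|^p w.r.t. μ
  have int_mu : ∀ p : ℝ, 0 ≤ p → Integrable (fun x : ℝ => |x| ^ p) μ := by
    intro p hp
    rw [hμ, integrable_withDensity_iff_integrable_smul hg]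
    refine (pdf_mul_integrable σ p hσ hp).congr ?_
    filter_upwards with x
    show gaussianPDFReal 0 (σ ^ 2).toNNReal x * |x| ^ p = (g x : ℝ) • |x| ^ p
    rw [smul_eq_mul, hgx]
  have int_t : Integrable (fun x : ℝ => |x| ^ t) μ := int_mu t ht0.le
  have hrw2 : ∀ x : ℝ, (|x| ^ t) ^ 2 = |x| ^ (t * 2) := by
    intro x
    rw [← Real.rpow_natCast (|x| ^ t) 2, ← Real.rpow_mul (abs_nonneg x)]
    norm_num
  have int_2t : Integrable (fun x : ℝ => (|x| ^ t) ^ 2) μ := by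
    apply (int_mu (t * 2) (by linarith)).congr
    filter_upwards with x using (hrw2 x).symm
  -- positivity of the measure of S
  have hμS_top : μ S ≠ ⊤ := measure_ne_top μ S
  have hSopen : IsOpen S :=
    isOpen_lt continuous_const (continuous_abs.rpow_const (fun x => Or.inr ht0.le))
  have hSne : S.Nonempty := by
    refine ⟨τ + 1, ?_⟩
    show τ < |τ + 1| ^ t
    rw [abs_of_pos (by linarith)]
    calc τ < τ + 1 := by linarith
      _ = (τ + 1) ^ (1 : ℝ) := (Real.rpow_one _).symm
      _ ≤ (τ + 1) ^ t := Real.rpow_le_rpow_of_exponent_le (by linarith) ht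
  have hμS_pos : 0 < μ S := by
    rw [hμ, withDensity_apply _ hS, lintegral_pos_iff_support hg.coe_nnreal_ennreal]
    have hsupp : Function.support (fun x => ((g x : ℝ≥0) : ℝ≥0∞)) = univ := by
      ext x
      simp only [Function.mem_support, mem_univ, iff_true, ne_eq, ENNReal.coe_eq_zero]
      exact ne_of_gt (Real.toNNReal_pos.mpr (gaussianPDFReal_pos 0 v x hv))
    rw [hsupp, Measure.restrict_apply_univ]
    exact hSopen.measure_pos MeasureTheory.volume hSne
  have hP : 0 < (μ S).toReal := ENNReal.toReal_pos hμS_pos.ne' hμS_top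
  set P := (μ S).toReal with hPdef
  set I1 := ∫ x in S, |x| ^ t ∂μ with hI1def
  have hαP : α * P = I1 := by
    rw [hα]
    field_simp
  constructor
  · -- mean zero
    rw [integral_indicator hS,
      integral_sub int_t.integrableOn (integrableOn_const hμS_top),
      setIntegral_const, measureReal_def]
    simp only [smul_eq_mul]
    linear_combination -hαP
  · -- variance bound
    set Z := S.indicator (fun y => |y| ^ t - α) with hZdef
    have hZm : AEStronglyMeasurable Z μ :=
      ((hfm.sub_const α).indicator hS).aestronglyMeasurable
    have hvar := variance_le_expectation_sq (μ := μ) hZm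
    have hZsq : (Z ^ 2) = S.indicator (fun y => (|y| ^ t - α) ^ 2) := by
      funext x
      by_cases hx : x ∈ S <;> simp [hZdef, Set.indicator_apply, hx]
    have hexp : μ[Z ^ 2] = ∫ x in S, (|x| ^ t - α) ^ 2 ∂μ := by
      rw [hZsq, integral_indicator hS]
    -- expansion of the square
    have hsplit : ∫ x in S, (|x| ^ t - α) ^ 2 ∂μ
        = ((∫ x in S, (|x| ^ t) ^ 2 ∂μ) - 2 * α * I1) + α ^ 2 * P := by
      have e1 : ∀ x : ℝ, (|x| ^ t - α) ^ 2
          = ((|x| ^ t) ^ 2 - 2 * α * |x| ^ t) + α ^ 2 := fun x => by ring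
      calc ∫ x in S, (|x| ^ t - α) ^ 2 ∂μ
          = ∫ x in S, (((|x| ^ t) ^ 2 - 2 * α * |x| ^ t) + α ^ 2) ∂μ := by
            apply integral_congr_ae
            filter_upwards with x using e1 x
        _ = (∫ x in S, ((|x| ^ t) ^ 2 - 2 * α * |x| ^ t) ∂μ)
            + ∫ x in S, (α ^ 2 : ℝ) ∂μ := by
            apply integral_add
            · exact int_2t.integrableOn.sub (int_t.const_mul (2 * α)).integrableOn
            · exact integrableOn_const hμS_top
        _ = ((∫ x in S, (|x| ^ t) ^ 2 ∂μ) - 2 * α * I1) + α ^ 2 * P := by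
            rw [integral_sub int_2t.integrableOn (int_t.const_mul (2 * α)).integrableOn,
              setIntegral_const, measureReal_def, integral_const_mul, smul_eq_mul]
            ring
    -- discard the negative part
    have h2aI : 2 * α * I1 = 2 * α ^ 2 * P := by rw [← hαP]; ring
    have hle2 : μ[Z ^ 2] ≤ ∫ x in S, (|x| ^ t) ^ 2 ∂μ := by
      rw [hexp, hsplit]
      nlinarith [mul_nonneg (sq_nonneg α) hP.le]
    -- the analytic bound on the second moment over S
    have hA : ∫ x in S, (|x| ^ t) ^ 2 ∂μ
        ≤ 2 * Real.exp (8 * t ^ 2) * (σ ^ t * lam ^ t) * Real.exp (-lam ^ 2 / σ ^ 2) := by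
      rw [hμ, setIntegral_withDensity_eq_setIntegral_smul hg _ hS]
      set c : ℝ := (Real.sqrt (2 * Real.pi * σ ^ 2))⁻¹ with hc
      have hcpos : 0 < c := by rw [hc]; positivity
      -- pointwise facts on S
      have hxS : ∀ x ∈ S, 16 * lam ^ 2 ≤ x ^ 2 := by
        intro x hx
        have hx' : τ < |x| ^ t := hx
        have h4 : 4 * t * lam ≤ |x| := by
          by_contra hcon
          push_neg at hcon
          have h1 : |x| ^ t ≤ (4 * t * lam) ^ t :=
            Real.rpow_le_rpow (abs_nonneg x) hcon.le ht0.le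
          have h2 : (4 * t * lam) ^ t = (4 * t) ^ t * lam ^ t :=
            Real.mul_rpow (by positivity) hlam.le
          rw [h2] at h1
          linarith
        have h5 : 4 * lam ≤ |x| := le_trans (by nlinarith) h4
        nlinarith [mul_self_le_mul_self (by positivity : (0:ℝ) ≤ 4 * lam) h5, sq_abs x]
      have hdom_int : Integrable (fun x : ℝ =>
          (c * Real.exp (2 * (t * 2) ^ 2) * σ ^ (t * 2) * Real.exp (-(4 * lam ^ 2) / σ ^ 2))
            * Real.exp (-(1 / (8 * σ ^ 2)) * x ^ 2)) :=
        (integrable_exp_neg_mul_sq (by positivity)).const_mul _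
      have hptS : ∀ x ∈ S, (g x : ℝ) • (|x| ^ t) ^ 2
          ≤ (c * Real.exp (2 * (t * 2) ^ 2) * σ ^ (t * 2) * Real.exp (-(4 * lam ^ 2) / σ ^ 2))
            * Real.exp (-(1 / (8 * σ ^ 2)) * x ^ 2) := by
        intro x hx
        rw [smul_eq_mul, hgx, pdf_formula σ hσ x, hrw2]
        have e1 : Real.exp (-x ^ 2 / (2 * σ ^ 2))
            = Real.exp (-x ^ 2 / (4 * σ ^ 2)) * Real.exp (-x ^ 2 / (4 * σ ^ 2)) := by
          rw [← Real.exp_add]; congr 1; field_simp; ring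
        have e2 : Real.exp (-x ^ 2 / (4 * σ ^ 2)) ≤ Real.exp (-(4 * lam ^ 2) / σ ^ 2) := by
          apply Real.exp_le_exp.mpr
          rw [div_le_div_iff₀ (by positivity) (by positivity)]
          nlinarith [mul_le_mul_of_nonneg_right (hxS x hx) (sq_nonneg σ)]
        have e3 : |x| ^ (t * 2)
            ≤ Real.exp (2 * (t * 2) ^ 2) * σ ^ (t * 2) * Real.exp (x ^ 2 / (8 * σ ^ 2)) :=
          abs_rpow_le_aux (by linarith) hσ x
        have e4 : Real.exp (x ^ 2 / (8 * σ ^ 2)) * Real.exp (-x ^ 2 / (4 * σ ^ 2))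
            = Real.exp (-(1 / (8 * σ ^ 2)) * x ^ 2) := by
          rw [← Real.exp_add]; congr 1; field_simp; ring
        calc c * Real.exp (-x ^ 2 / (2 * σ ^ 2)) * |x| ^ (t * 2)
            = (c * Real.exp (-x ^ 2 / (4 * σ ^ 2)))
              * (|x| ^ (t * 2) * Real.exp (-x ^ 2 / (4 * σ ^ 2))) := by rw [e1]; ring
          _ ≤ (c * Real.exp (-(4 * lam ^ 2) / σ ^ 2))
              * ((Real.exp (2 * (t * 2) ^ 2) * σ ^ (t * 2) * Real.exp (x ^ 2 / (8 * σ ^ 2)))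
                  * Real.exp (-x ^ 2 / (4 * σ ^ 2))) := by
              apply mul_le_mul (mul_le_mul_of_nonneg_left e2 hcpos.le)
                (mul_le_mul_of_nonneg_right e3 (Real.exp_pos _).le)
              · positivity
              · positivity
          _ = (c * Real.exp (2 * (t * 2) ^ 2) * σ ^ (t * 2) * Real.exp (-(4 * lam ^ 2) / σ ^ 2))
              * (Real.exp (x ^ 2 / (8 * σ ^ 2)) * Real.exp (-x ^ 2 / (4 * σ ^ 2))) := by ring
          _ = _ := by rw [e4]
      have int1 : IntegrableOn (fun x : ℝ => (g x : ℝ≥0) • (|x| ^ t) ^ 2) S := by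
        apply Integrable.integrableOn
        refine (pdf_mul_integrable σ (t * 2) hσ (by linarith)).congr ?_
        filter_upwards with x
        show gaussianPDFReal 0 (σ ^ 2).toNNReal x * |x| ^ (t * 2) = (g x : ℝ≥0) • (|x| ^ t) ^ 2
        rw [NNReal.smul_def, smul_eq_mul, hgx, hrw2]
      have step1 := setIntegral_mono_on int1 hdom_int.integrableOn hS hptS
      have step2 := setIntegral_le_integral (s := S) hdom_int
        (Filter.Eventually.of_forall (fun x => by positivity))
      have hgauss : ∫ x : ℝ, Real.exp (-(1 / (8 * σ ^ 2)) * x ^ 2)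
          = Real.sqrt (Real.pi / (1 / (8 * σ ^ 2))) := integral_gaussian _
      have hval : c * Real.sqrt (Real.pi / (1 / (8 * σ ^ 2))) = 2 := by
        rw [hc, ← Real.sqrt_inv, ← Real.sqrt_mul (by positivity)]
        rw [show (2 * Real.pi * σ ^ 2)⁻¹ * (Real.pi / (1 / (8 * σ ^ 2))) = 4 by
          field_simp; ring]
        rw [show (4:ℝ) = 2 ^ 2 by norm_num, Real.sqrt_sq (by norm_num)]
      have step3 : ∫ x : ℝ,
          (c * Real.exp (2 * (t * 2) ^ 2) * σ ^ (t * 2) * Real.exp (-(4 * lam ^ 2) / σ ^ 2))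
            * Real.exp (-(1 / (8 * σ ^ 2)) * x ^ 2)
          = 2 * Real.exp (2 * (t * 2) ^ 2) * σ ^ (t * 2) * Real.exp (-(4 * lam ^ 2) / σ ^ 2) := by
        rw [integral_const_mul, hgauss]
        calc c * Real.exp (2 * (t * 2) ^ 2) * σ ^ (t * 2) * Real.exp (-(4 * lam ^ 2) / σ ^ 2)
              * Real.sqrt (Real.pi / (1 / (8 * σ ^ 2)))
            = (c * Real.sqrt (Real.pi / (1 / (8 * σ ^ 2))))
              * (Real.exp (2 * (t * 2) ^ 2) * σ ^ (t * 2)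
                * Real.exp (-(4 * lam ^ 2) / σ ^ 2)) := by ring
          _ = _ := by rw [hval]; ring
      have hfinal : 2 * Real.exp (2 * (t * 2) ^ 2) * σ ^ (t * 2) * Real.exp (-(4 * lam ^ 2) / σ ^ 2)
          ≤ 2 * Real.exp (8 * t ^ 2) * (σ ^ t * lam ^ t) * Real.exp (-lam ^ 2 / σ ^ 2) := by
        rw [show (2 : ℝ) * (t * 2) ^ 2 = 8 * t ^ 2 by ring,
          show t * 2 = t + t by ring, Real.rpow_add hσ]
        have hstl : σ ^ t ≤ lam ^ t := Real.rpow_le_rpow hσ.le hsl ht0.le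
        have hee : -(4 * lam ^ 2) / σ ^ 2 ≤ -lam ^ 2 / σ ^ 2 := by
          rw [div_le_div_iff_of_pos_right (by positivity : (0:ℝ) < σ ^ 2)]
          nlinarith [sq_nonneg lam]
        gcongr
      calc ∫ x in S, (g x : ℝ≥0) • (|x| ^ t) ^ 2 ≤ _ := step1
        _ ≤ _ := step2
        _ = _ := step3
        _ ≤ _ := hfinal
    exact le_trans hvar (le_trans hle2 hA)

theorem variance_sum_H0 (t : ℝ) (ht : 1 ≤ t) :
    ∃ C > 0, ∀ (ι : Type) [Fintype ι] (σ : ι → ℝ) (lam ν : ℝ) (s : ℕ),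
      1 ≤ s → 0 < lam → 0 < ν → (∀ j, 0 < σ j) → (∀ j, σ j ≤ lam) →
      (∑ j, σ j ^ t * Real.exp (-lam ^ 2 / σ j ^ 2)) ≤ (s : ℝ) * ν ^ t →
      ∀ τ ρ : ℝ, τ = (4 * t) ^ t * lam ^ t + ν ^ t / (s : ℝ) → ρ = (s : ℝ) * τ →
      ∀ α : ι → ℝ,
      (∀ j, α j =
        (∫ x in {x : ℝ | τ < |x| ^ t}, |x| ^ t ∂(gaussianReal 0 ((σ j) ^ 2).toNNReal)) /
          ((gaussianReal 0 ((σ j) ^ 2).toNNReal) {x : ℝ | τ < |x| ^ t}).toReal) →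
      (∀ j, (∫ x, {y : ℝ | τ < |y| ^ t}.indicator (fun y => |y| ^ t - α j) x
          ∂(gaussianReal 0 ((σ j) ^ 2).toNNReal)) = 0) ∧
      (∑ j, variance ({y : ℝ | τ < |y| ^ t}.indicator (fun y => |y| ^ t - α j))
          (gaussianReal 0 ((σ j) ^ 2).toNNReal))
        ≤ C * ρ ^ 2 := by
  refine ⟨2 * Real.exp (8 * t ^ 2), by positivity, ?_⟩
  intro ι _ σ lam ν s hs hlam hν hσ hsl hsum τ ρ hτ hρ α hα
  have ht0 : 0 < t := by linarith
  have hs' : (0:ℝ) < (s:ℝ) := by exact_mod_cast hs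
  have hτge : (4 * t) ^ t * lam ^ t ≤ τ := by
    rw [hτ]
    have : 0 < ν ^ t / (s:ℝ) := by positivity
    linarith
  have hsingle := fun j => single_gaussian t ht (σ j) lam τ (hσ j) hlam (hsl j) hτge (α j) (hα j)
  refine ⟨fun j => (hsingle j).1, ?_⟩
  have hlt : lam ^ t ≤ τ := by
    have h1 : (1:ℝ) ≤ (4 * t) ^ t := by
      calc (1:ℝ) = 1 ^ t := (Real.one_rpow t).symm
        _ ≤ (4 * t) ^ t := Real.rpow_le_rpow (by norm_num) (by linarith) ht0.le
    nlinarith [Real.rpow_pos_of_pos hlam t]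
  have hnt : ν ^ t ≤ (s:ℝ) * τ := by
    have h2 : ν ^ t / (s:ℝ) ≤ τ := by
      rw [hτ]
      have := mul_pos (Real.rpow_pos_of_pos (by linarith : (0:ℝ) < 4 * t) t)
        (Real.rpow_pos_of_pos hlam t)
      linarith
    calc ν ^ t = ν ^ t / (s:ℝ) * (s:ℝ) := by field_simp
      _ ≤ τ * (s:ℝ) := mul_le_mul_of_nonneg_right h2 hs'.le
      _ = (s:ℝ) * τ := by ring
  have hτpos : 0 < τ :=
    lt_of_lt_of_le (mul_pos (Real.rpow_pos_of_pos (by linarith) t)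
      (Real.rpow_pos_of_pos hlam t)) hτge
  calc ∑ j, variance ({y : ℝ | τ < |y| ^ t}.indicator (fun y => |y| ^ t - α j))
          (gaussianReal 0 ((σ j) ^ 2).toNNReal)
      ≤ ∑ j, 2 * Real.exp (8 * t ^ 2) * (σ j ^ t * lam ^ t)
          * Real.exp (-lam ^ 2 / σ j ^ 2) :=
        Finset.sum_le_sum (fun j _ => (hsingle j).2)
    _ = 2 * Real.exp (8 * t ^ 2) * lam ^ t
          * ∑ j, σ j ^ t * Real.exp (-lam ^ 2 / σ j ^ 2) := by
        rw [Finset.mul_sum]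
        exact Finset.sum_congr rfl (fun j _ => by ring)
    _ ≤ 2 * Real.exp (8 * t ^ 2) * lam ^ t * ((s:ℝ) * ν ^ t) := by
        apply mul_le_mul_of_nonneg_left hsum
        positivity
    _ ≤ 2 * Real.exp (8 * t ^ 2) * ρ ^ 2 := by
        have h3 : lam ^ t * ((s:ℝ) * ν ^ t) ≤ τ * ((s:ℝ) * ((s:ℝ) * τ)) := by
          gcongr
        have h4 : ρ ^ 2 = τ * ((s:ℝ) * ((s:ℝ) * τ)) := by rw [hρ]; ring
        rw [h4]
        calc 2 * Real.exp (8 * t ^ 2) * lam ^ t * ((s:ℝ) * ν ^ t)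
            = 2 * Real.exp (8 * t ^ 2) * (lam ^ t * ((s:ℝ) * ν ^ t)) := by ring
          _ ≤ 2 * Real.exp (8 * t ^ 2) * (τ * ((s:ℝ) * ((s:ℝ) * τ))) := by
              apply mul_le_mul_of_nonneg_left h3 (by positivity)
          _ = 2 * Real.exp (8 * t ^ 2) * (τ * ((s:ℝ) * ((s:ℝ) * τ))) := rfl
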